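/- Let N be a natural number with N ≥ 2, and let γ be a real number with 2N/(N+1) < γ ≤ 2. Then there exists a real number p > N/2 such that, setting θ := [((p−1+γ)/γ)·(1 − 1/(p+1))] / [1/N − 1/γ + (p−1+γ)/γ], one has 0 < θ < 1 and θ·(p+1)/(p−1+γ) < 1. -/
import Mathlib


/-- Exponent choice (15) of Lemma 3.4: for `N ≥ 2` and `2N/(N+1) < γ ≤ 2` there exists
`p > N/2` such that the interpolation parameter
`θ = ((p-1+γ)/γ · (1 - 1/(p+1))) / (1/N - 1/γ + (p-1+γ)/γ)` satisfies
`θ ∈ (0,1)` and `θ(p+1)/(p-1+γ) < 1`. -/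
theorem exponent_choice_lemma_3_4 (N : ℕ) (hN : 2 ≤ N) (γ : ℝ)
    (hγ1 : 2 * (N : ℝ) / ((N : ℝ) + 1) < γ) (hγ2 : γ ≤ 2) :
    ∃ p θ : ℝ, (N : ℝ) / 2 < p ∧
      θ = ((p - 1 + γ) / γ * (1 - 1 / (p + 1))) /
            (1 / (N : ℝ) - 1 / γ + (p - 1 + γ) / γ) ∧
      0 < θ ∧ θ < 1 ∧ θ * (p + 1) / (p - 1 + γ) < 1 := by
  have hn : (2:ℝ) ≤ (N:ℝ) := by exact_mod_cast hN
  set n : ℝ := (N:ℝ) with hndef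
  have hn0 : (0:ℝ) < n := by linarith
  have hn1 : (0:ℝ) < n + 1 := by linarith
  have hγ0 : (0:ℝ) < γ := lt_trans (by positivity) hγ1
  have hkey : 2 * n < γ * (n + 1) := by
    rw [div_lt_iff₀ hn1] at hγ1; linarith
  have hpg : (0:ℝ) < n - 1 + γ := by linarith
  have hD : (0:ℝ) < 1 / n - 1 / γ + (n - 1 + γ) / γ := by
    have e : 1 / n - 1 / γ + (n - 1 + γ) / γ = 1 / n + (n - 2 + γ) / γ := by
      field_simp; ring
    have h2 : (0:ℝ) < n - 2 + γ := by linarith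
    rw [e]; positivity
  have hnum : (0:ℝ) < (n - 1 + γ) / γ * (1 - 1 / (n + 1)) := by
    have : 1 / (n + 1) < 1 := by
      rw [div_lt_one hn1]; linarith
    have h2 : (0:ℝ) < 1 - 1 / (n + 1) := by linarith
    positivity
  refine ⟨n, ((n - 1 + γ) / γ * (1 - 1 / (n + 1))) /
      (1 / n - 1 / γ + (n - 1 + γ) / γ), by linarith, rfl, ?_, ?_, ?_⟩
  · positivity
  · rw [div_lt_one hD]
    have diff : (1 / n - 1 / γ + (n - 1 + γ) / γ) -
        (n - 1 + γ) / γ * (1 - 1 / (n + 1)) =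
        (γ * (2 * n + 1) - 2 * n) / (n * γ * (n + 1)) := by
      field_simp; ring
    have hpos : (0:ℝ) < (γ * (2 * n + 1) - 2 * n) / (n * γ * (n + 1)) := by
      apply div_pos _ (by positivity)
      nlinarith
    linarith [diff ▸ hpos]
  · have hP : (0:ℝ) < γ + n * (n - 2 + γ) := by nlinarith
    have hDeq : 1 / n - 1 / γ + (n - 1 + γ) / γ = (γ + n * (n - 2 + γ)) / (n * γ) := by
      field_simp; ring
    rw [hDeq]
    have e : ((n - 1 + γ) / γ * (1 - 1 / (n + 1))) /
        ((γ + n * (n - 2 + γ)) / (n * γ)) * (n + 1) / (n - 1 + γ)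
        = n ^ 2 / (γ + n * (n - 2 + γ)) := by
      rw [div_eq_div_iff (by positivity) (ne_of_gt hP)]
      field_simp
      ring
    rw [e, div_lt_one hP]
    nlinarith
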